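/- For every natural number n ≥ 3, the number ℓ(M_n) of covering pairs in the Motzkin lattice M_n equals the coefficient of x^{n−2} in (1+x+x^2)^n plus the coefficient of x^{n−3} in (1+x+x^2)^{n−1}. -/

import Mathlib

/-- Steps of a (Grand) Motzkin path: up `U = (1,1)`, down `D = (1,-1)`
and horizontal `H = (1,0)`. -/
inductive Step : Type
  | U : Step
  | D : Step
  | H : Step
  deriving DecidableEq

/-- The height of a path: number of up steps minus number of down steps. -/
def height (w : List Step) : ℤ := (w.count Step.U : ℤ) - (w.count Step.D : ℤ)

/-- A Motzkin path of length `n`: a word of length `n` with equally many up and down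
steps, all of whose prefixes have nonnegative height. -/
def IsMotzkin (n : ℕ) (w : List Step) : Prop :=
  w.length = n ∧ w.count Step.U = w.count Step.D ∧ ∀ i : ℕ, 0 ≤ height (w.take i)

/-- A Grand Motzkin path of length `n`: a word of length `n` with equally many up
and down steps. -/
def IsGrandMotzkin (n : ℕ) (w : List Step) : Prop :=
  w.length = n ∧ w.count Step.U = w.count Step.D

/-- The order on paths: pointwise comparison of the heights after each number of steps. -/
def PathLe (w w' : List Step) : Prop :=
  ∀ i : ℕ, height (w.take i) ≤ height (w'.take i)

/-- Strict order on paths. -/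
def PathLt (w w' : List Step) : Prop := PathLe w w' ∧ ¬ PathLe w' w

/-- `Covers P w w'` : within the class of paths satisfying `P`, the path `w'` covers `w`,
i.e. `w < w'` and no path of the class lies strictly between them. -/
def Covers (P : List Step → Prop) (w w' : List Step) : Prop :=
  P w ∧ P w' ∧ PathLt w w' ∧ ∀ z : List Step, P z → ¬ (PathLt w z ∧ PathLt z w')

/-- Number of occurrences of the factor `xy` in the word `w`. -/
def countFactor (x y : Step) (w : List Step) : ℕ :=
  ((Finset.range w.length).filter
    (fun i => w[i]? = some x ∧ w[i + 1]? = some y)).card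

/-- Number of occurrences of the factor `xy` in the word `w` whose height
(the height after the first `i` steps, the factor occupying positions `i` and `i+1`,
`0`-indexed) is at least `1`. -/
def countFactorHigh (x y : Step) (w : List Step) : ℕ :=
  ((Finset.range w.length).filter
    (fun i => w[i]? = some x ∧ w[i + 1]? = some y ∧ 1 ≤ height (w.take i))).card

/-- The number of edges of the Hasse diagram of the Motzkin lattice `M_n`,
i.e. the number of covering pairs of Motzkin paths of length `n`. -/
noncomputable def motzkinEdges (n : ℕ) : ℕ :=
  Nat.card {p : List Step × List Step // Covers (IsMotzkin n) p.1 p.2}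

/-- The number of edges of the Hasse diagram of the Grand Motzkin lattice `GM_n`. -/
noncomputable def grandMotzkinEdges (n : ℕ) : ℕ :=
  Nat.card {p : List Step × List Step // Covers (IsGrandMotzkin n) p.1 p.2}

/-- The `n`-th Motzkin number: the number of Motzkin paths of length `n`. -/
noncomputable def motzkinNum (n : ℕ) : ℕ :=
  Nat.card {w : List Step // IsMotzkin n w}

/-- The `n`-th central trinomial coefficient: the coefficient of `x^n` in `(1+x+x²)^n`. -/
noncomputable def centralTrinomial (n : ℕ) : ℕ :=
  (((1 : Polynomial ℕ) + Polynomial.X + Polynomial.X ^ 2) ^ n).coeff n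

theorem List.get?_eq_get {α : Type*} {l : List α} {n : ℕ} (h : n < l.length) :
    l[n]? = some (l.get ⟨n, h⟩) := by simp

theorem List.get?_eq_none {α : Type*} {l : List α} {n : ℕ} : l[n]? = none ↔ l.length ≤ n :=
  List.getElem?_eq_none_iff

theorem List.get?_eq_some {α : Type*} {l : List α} {n : ℕ} {a : α} :
    l[n]? = some a ↔ ∃ h : n < l.length, l.get ⟨n, h⟩ = a := by
  rw [List.getElem?_eq_some_iff]; rfl

theorem List.drop_eq_get_cons {α : Type*} {l : List α} {n : ℕ} (h : n < l.length) :
    l.drop n = l.get ⟨n, h⟩ :: l.drop (n + 1) := List.drop_eq_getElem_cons h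

theorem List.getD_eq_get? {α : Type*} (l : List α) (n : ℕ) (d : α) :
    l.getD n d = (l[n]?).getD d := List.getD_eq_getElem?_getD

theorem List.get?_append_right {α : Type*} {l₁ l₂ : List α} {n : ℕ} (h : l₁.length ≤ n) :
    (l₁ ++ l₂)[n]? = l₂[n - l₁.length]? := List.getElem?_append_right h

theorem List.ext_get? {α : Type*} {l₁ l₂ : List α} (h : ∀ n : ℕ, l₁[n]? = l₂[n]?) : l₁ = l₂ :=
  List.ext_getElem? h

namespace MZ

def δ : Step → ℤ | Step.U => 1 | Step.D => -1 | Step.H => 0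

def hgt (w : List Step) (i : ℕ) : ℤ := height (w.take i)

lemma height_nil : height ([] : List Step) = 0 := by simp [height]

lemma height_append (u v : List Step) : height (u ++ v) = height u + height v := by
  simp [height, List.count_append]; ring

lemma height_single (c : Step) : height [c] = δ c := by
  cases c <;> simp [height, δ, List.count_singleton] <;> rfl

lemma hgt_zero (w : List Step) : hgt w 0 = 0 := by simp [hgt, height_nil]

lemma hgt_succ (w : List Step) (i : ℕ) (c : Step) (h : w[i]? = some c) :
    hgt w (i + 1) = hgt w i + δ c := by
  unfold hgt
  rw [List.take_succ]
  rw [h]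
  simp [height_append, height_single]

lemma hgt_of_len_le (w : List Step) (i : ℕ) (h : w.length ≤ i) : hgt w i = height w := by
  unfold hgt; rw [List.take_of_length_le h]

lemma δ_inj {c c' : Step} (h : δ c = δ c') : c = c' := by
  cases c <;> cases c' <;> simp [δ] at h ⊢ <;> omega

lemma eq_of_hgt {w w' : List Step} (hl : w.length = w'.length)
    (hh : ∀ i, hgt w i = hgt w' i) : w = w' := by
  apply List.ext_get?
  intro i
  rcases lt_or_ge i w.length with hi | hi
  · have hi' : i < w'.length := hl ▸ hi
    have hc : w[i]? = some (w.get ⟨i, hi⟩) := List.get?_eq_get hi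
    have hc' : w'[i]? = some (w'.get ⟨i, hi'⟩) := List.get?_eq_get hi'
    set c := w.get ⟨i, hi⟩; set c' := w'.get ⟨i, hi'⟩
    have e1 := hgt_succ w i c hc
    have e2 := hgt_succ w' i c' hc'
    have : δ c = δ c' := by
      have := hh (i+1); have := hh i; omega
    rw [hc, hc', δ_inj this]
  · rw [List.get?_eq_none.2 hi, List.get?_eq_none.2 (hl ▸ hi)]

lemma count_eq_iff_height (w : List Step) :
    w.count Step.U = w.count Step.D ↔ height w = 0 := by
  unfold height; omega

lemma isMotzkin_iff (n : ℕ) (w : List Step) :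
    IsMotzkin n w ↔ w.length = n ∧ height w = 0 ∧ ∀ i, 0 ≤ hgt w i := by
  unfold IsMotzkin
  rw [count_eq_iff_height]
  rfl

lemma hgt_append_left (u v : List Step) (i : ℕ) (h : i ≤ u.length) :
    hgt (u ++ v) i = hgt u i := by
  unfold hgt; rw [List.take_append_of_le_length h]

lemma hgt_append_right (u v : List Step) (i : ℕ) :
    hgt (u ++ v) (u.length + i) = height u + hgt v i := by
  unfold hgt
  rw [List.take_add, List.take_append_of_le_length (le_refl _), List.take_of_length_le (le_refl _),
    List.drop_left, height_append]

lemma hgt_drop (w : List Step) (k i : ℕ) :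
    hgt (w.drop k) i = hgt w (k + i) - hgt w k := by
  unfold hgt
  rw [List.take_add, height_append]
  have : (w.take k).take k = w.take k := by
    rw [List.take_take, min_self]
  omega

lemma hgt_take (w : List Step) (j i : ℕ) : hgt (w.take j) i = hgt w (min i j) := by
  unfold hgt; rw [List.take_take]

lemma height_le_length (w : List Step) : height w ≤ w.length ∧ -(w.length : ℤ) ≤ height w := by
  unfold height
  have h1 := List.count_le_length (a := Step.U) (l := w)
  have h2 := List.count_le_length (a := Step.D) (l := w)
  omega

lemma hgt_step (w : List Step) (i : ℕ) :
    hgt w i - 1 ≤ hgt w (i + 1) ∧ hgt w (i + 1) ≤ hgt w i + 1 := by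
  rcases lt_or_ge i w.length with hi | hi
  · have hc : w[i]? = some (w.get ⟨i, hi⟩) := List.get?_eq_get hi
    rw [hgt_succ w i _ hc]
    cases w.get ⟨i, hi⟩ <;> simp [δ] <;> omega
  · rw [hgt_of_len_le w i hi, hgt_of_len_le w (i+1) (by omega)]
    omega

lemma hgt_mono_len (w : List Step) (i : ℕ) (h : w.length ≤ i) : hgt w i = hgt w w.length := by
  rw [hgt_of_len_le w i h, hgt_of_len_le w w.length (le_refl _)]

/-- First passage to level `t` from above. -/
lemma exists_first_passage (w : List Step) (t : ℤ) (hex : ∃ i, hgt w i ≤ t)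
    (h0 : t < hgt w 0) :
    ∃ j, 0 < j ∧ j ≤ w.length ∧ hgt w j = t ∧ (∀ i < j, t < hgt w i) ∧
      w[j - 1]? = some Step.D := by
  classical
  let j := Nat.find hex
  have hj : hgt w j ≤ t := Nat.find_spec hex
  have hlt : ∀ i < j, t < hgt w i := fun i hi => lt_of_not_ge (Nat.find_min hex hi)
  have hj0 : 0 < j := by
    rcases Nat.eq_zero_or_pos j with h | h
    · exfalso; rw [h] at hj; omega
    · exact h
  have hprev : t < hgt w (j - 1) := hlt _ (by omega)
  have hstep := hgt_step w (j - 1)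
  rw [Nat.sub_add_cancel hj0] at hstep
  have hjt : hgt w j = t := by omega
  have hjlen : j ≤ w.length := by
    by_contra hcon
    push_neg at hcon
    have : w.length < j := hcon
    have := hgt_mono_len w j (by omega)
    have hwl : t < hgt w w.length := by
      rcases Nat.eq_zero_or_pos w.length with h0' | h0'
      · rw [h0']; exact h0
      · exact hlt _ hcon
    omega
  have hj1len : j - 1 < w.length := by omega
  have hc : w[j-1]? = some (w.get ⟨j-1, hj1len⟩) := List.get?_eq_get hj1len
  have e := hgt_succ w (j-1) _ hc
  rw [Nat.sub_add_cancel hj0] at e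
  have hδ : δ (w.get ⟨j-1, hj1len⟩) ≤ -1 := by omega
  have hD : w.get ⟨j-1, hj1len⟩ = Step.D := by
    cases hg : w.get ⟨j-1, hj1len⟩ <;> rw [hg] at hδ <;> simp [δ] at hδ <;> try rfl
  exact ⟨j, hj0, hjlen, hjt, hlt, by rw [hc, hD]⟩

/-- Last visit to level `h-1` in a word ending at height `h ≥ 1` with the step after it a `U`,
and all heights after it at least `h`. -/
lemma exists_last_visit (u : List Step) (h : ℤ) (hh : 1 ≤ h) (hend : height u = h) :
    ∃ j, j < u.length ∧ hgt u j = h - 1 ∧ u[j]? = some Step.U ∧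
      (∀ i, j < i → i ≤ u.length → h ≤ hgt u i) := by
  classical
  have hbase : hgt u 0 ≤ h - 1 := by rw [hgt_zero]; omega
  let P : ℕ → Prop := fun j => hgt u j ≤ h - 1
  have hinst : DecidablePred P := fun j => by unfold P; infer_instance
  let j := Nat.findGreatest P u.length
  have hjle : j ≤ u.length := Nat.findGreatest_le _
  have hPj : P j := Nat.findGreatest_spec (Nat.zero_le _) hbase
  have hgr : ∀ m, j < m → m ≤ u.length → ¬ P m := fun m h1 h2 =>
    Nat.findGreatest_is_greatest h1 h2
  have hPlen : ¬ P u.length := by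
    have : hgt u u.length = h := by rw [hgt_of_len_le u u.length (le_refl _), hend]
    simp only [P, this]; omega
  have hjlt : j < u.length := by
    rcases lt_or_eq_of_le hjle with h' | h'
    · exact h'
    · exact absurd (h' ▸ hPj) hPlen
  have hafter : ∀ i, j < i → i ≤ u.length → h ≤ hgt u i := by
    intro i h1 h2
    have := hgr i h1 h2
    simp only [P, not_le] at this
    omega
  have hnext : h ≤ hgt u (j+1) := hafter _ (by omega) (by omega)
  have hstep := hgt_step u j
  have hgtj : hgt u j = h - 1 := by
    have : hgt u j ≤ h - 1 := hPj
    omega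
  have hc : u[j]? = some (u.get ⟨j, hjlt⟩) := List.get?_eq_get hjlt
  have e := hgt_succ u j _ hc
  have hδ : δ (u.get ⟨j, hjlt⟩) = 1 := by omega
  have hU : u.get ⟨j, hjlt⟩ = Step.U := by
    cases hg : u.get ⟨j, hjlt⟩ <;> rw [hg] at hδ <;> simp [δ] at hδ <;> try rfl
  refine ⟨j, hjlt, hgtj, ?_, hafter⟩
  rw [hc, hU]

def up : Step → Step | Step.D => Step.H | Step.H => Step.U | Step.U => Step.U
def dn : Step → Step | Step.U => Step.H | Step.H => Step.D | Step.D => Step.D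

def splice (w : List Step) (j : ℕ) (x y : Step) : List Step :=
  w.take j ++ x :: y :: w.drop (j + 2)

lemma δ_up {a : Step} (h : δ a ≤ 0) : δ (up a) = δ a + 1 := by
  cases a <;> simp [δ, up] at h ⊢

lemma δ_dn {b : Step} (h : 0 ≤ δ b) : δ (dn b) = δ b - 1 := by
  cases b <;> simp [δ, dn] at h ⊢

lemma splice_self {w : List Step} {j : ℕ} {a b : Step}
    (ha : w[j]? = some a) (hb : w[j+1]? = some b) :
    splice w j a b = w := by
  have hj : j < w.length := List.get?_eq_some.1 ha |>.1
  have hj1 : j + 1 < w.length := List.get?_eq_some.1 hb |>.1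
  have h1 : w.drop j = a :: w.drop (j+1) := by
    rw [List.drop_eq_get_cons hj]
    congr 1
    have := List.get?_eq_get hj
    rw [this] at ha; exact (Option.some_inj.1 ha)
  have h2 : w.drop (j+1) = b :: w.drop (j+2) := by
    rw [List.drop_eq_get_cons hj1]
    congr 1
    have := List.get?_eq_get hj1
    rw [this] at hb; exact (Option.some_inj.1 hb)
  unfold splice
  conv_rhs => rw [← List.take_append_drop j w]
  rw [h1, h2]

lemma length_take_of_le {w : List Step} {j : ℕ} (h : j ≤ w.length) :
    (w.take j).length = j := by simp [List.length_take]; omega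

lemma splice_length {w : List Step} {j : ℕ} (x y : Step) (h : j + 1 < w.length) :
    (splice w j x y).length = w.length := by
  unfold splice
  simp [List.length_take, List.length_drop]
  omega

lemma hgt_splice_low {w : List Step} {j : ℕ} (x y : Step) (h : j + 1 < w.length)
    {i : ℕ} (hi : i ≤ j) :
    hgt (splice w j x y) i = hgt w i := by
  unfold splice
  rw [hgt_append_left _ _ i (by rw [length_take_of_le (by omega)]; omega),
    hgt_take, min_eq_left hi]

lemma hgt_splice_mid {w : List Step} {j : ℕ} (x y : Step) (h : j + 1 < w.length) :
    hgt (splice w j x y) (j + 1) = hgt w j + δ x := by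
  unfold splice
  have hlen : (w.take j).length = j := length_take_of_le (by omega)
  have : j + 1 = (w.take j).length + 1 := by omega
  rw [this, hgt_append_right]
  have e1 : hgt (x :: y :: w.drop (j+2)) 1 = δ x := by
    show height ((x :: y :: w.drop (j+2)).take 1) = δ x
    rw [List.take_succ_cons, List.take_zero, height_single]
  rw [e1]; rfl

lemma hgt_splice_high {w : List Step} {j : ℕ} (x y : Step) (h : j + 1 < w.length) (k : ℕ) :
    hgt (splice w j x y) (j + 2 + k) = hgt w j + δ x + δ y + hgt (w.drop (j + 2)) k := by
  unfold splice
  have hlen : (w.take j).length = j := length_take_of_le (by omega)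
  have : j + 2 + k = (w.take j).length + (2 + k) := by omega
  rw [this, hgt_append_right]
  have h2 : (x :: y :: w.drop (j+2)).take (2 + k) = x :: y :: (w.drop (j+2)).take k := by
    have e : 2 + k = k + 1 + 1 := by omega
    rw [e, List.take_succ_cons, List.take_succ_cons]
  unfold hgt
  rw [h2]
  have : height (x :: y :: (w.drop (j+2)).take k)
      = δ x + δ y + height ((w.drop (j+2)).take k) := by
    have e1 : x :: y :: (w.drop (j+2)).take k = [x] ++ [y] ++ (w.drop (j+2)).take k := rfl
    rw [e1, height_append, height_append, height_single, height_single]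
  rw [this]
  have : height (w.take j) = hgt w j := rfl
  omega

lemma raise_hgt {w : List Step} {j : ℕ} {a b : Step}
    (ha : w[j]? = some a) (hb : w[j+1]? = some b)
    (hda : δ a ≤ 0) (hdb : 0 ≤ δ b) (i : ℕ) :
    hgt (splice w j (up a) (dn b)) i = hgt w i + (if i = j + 1 then 1 else 0) := by
  have hj1 : j + 1 < w.length := (List.get?_eq_some.1 hb).1
  have e1 : hgt w (j+1) = hgt w j + δ a := hgt_succ w j a ha
  have e2 : hgt w (j+2) = hgt w (j+1) + δ b := hgt_succ w (j+1) b hb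
  rcases lt_trichotomy i (j+1) with hi | hi | hi
  · rw [hgt_splice_low _ _ hj1 (by omega), if_neg (by omega)]
    omega
  · subst hi
    rw [hgt_splice_mid _ _ hj1, if_pos rfl, δ_up hda]
    omega
  · obtain ⟨k, rfl⟩ : ∃ k, i = j + 2 + k := ⟨i - (j+2), by omega⟩
    rw [hgt_splice_high _ _ hj1, if_neg (by omega), δ_up hda, δ_dn hdb]
    have e3 := hgt_drop w (j+2) k
    omega

lemma pathLe_refl (w : List Step) : PathLe w w := fun _ => le_refl _

lemma cover_of_marked {n : ℕ} {w : List Step} {j : ℕ} {a b : Step}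
    (hw : IsMotzkin n w) (ha : w[j]? = some a) (hb : w[j+1]? = some b)
    (hda : δ a ≤ 0) (hdb : 0 ≤ δ b) :
    Covers (IsMotzkin n) w (splice w j (up a) (dn b)) := by
  set w' := splice w j (up a) (dn b) with hw'def
  have hj1 : j + 1 < w.length := (List.get?_eq_some.1 hb).1
  have hh := raise_hgt ha hb hda hdb
  rw [← hw'def] at hh
  obtain ⟨hlen, hbal, hpos⟩ := (isMotzkin_iff n w).1 hw
  have hlen' : w'.length = w.length := hw'def ▸ splice_length _ _ hj1
  have hM' : IsMotzkin n w' := by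
    rw [isMotzkin_iff]
    refine ⟨by omega, ?_, ?_⟩
    · have h1 : height w' = hgt w' w'.length := (hgt_of_len_le _ _ (le_refl _)).symm
      have h2 : hgt w w.length = height w := hgt_of_len_le _ _ (le_refl _)
      rw [h1, hlen', hh w.length, if_neg (by omega)]
      omega
    · intro i; rw [hh i]; have := hpos i; split <;> omega
  have hLt : PathLt w w' := by
    constructor
    · intro i
      change hgt w i ≤ hgt w' i
      have := hh i; split at this <;> omega
    · intro hle
      have h3 := hle (j+1)
      change hgt w' (j+1) ≤ hgt w (j+1) at h3
      have := hh (j+1)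
      rw [if_pos rfl] at this
      omega
  refine ⟨hw, hM', hLt, ?_⟩
  rintro z hz ⟨⟨hle1, hnle1⟩, ⟨hle2, hnle2⟩⟩
  have hzlen : z.length = w.length := by
    obtain ⟨h1, _, _⟩ := hz; omega
  have hs1 : ∀ i, hgt w i ≤ hgt z i := fun i => hle1 i
  have hs2 : ∀ i, hgt z i ≤ hgt w' i := fun i => hle2 i
  by_cases hc : hgt z (j+1) = hgt w (j+1)
  · have hzw : z = w := by
      apply eq_of_hgt (by omega)
      intro i
      by_cases hij : i = j + 1
      · rw [hij]; exact hc
      · have := hh i; rw [if_neg hij] at this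
        have := hs1 i; have := hs2 i; omega
    exact hnle1 (hzw ▸ pathLe_refl w)
  · have hzw' : z = w' := by
      apply eq_of_hgt (by omega)
      intro i
      by_cases hij : i = j + 1
      · subst hij
        have := hh (j+1); rw [if_pos rfl] at this
        have := hs1 (j+1); have := hs2 (j+1); omega
      · have := hh i; rw [if_neg hij] at this
        have := hs1 i; have := hs2 i; omega
    exact hnle2 (hzw' ▸ pathLe_refl w')

lemma marked_of_cover {n : ℕ} {w w' : List Step}
    (hc : Covers (IsMotzkin n) w w') :
    ∃ j a b, w[j]? = some a ∧ w[j+1]? = some b ∧ δ a ≤ 0 ∧ 0 ≤ δ b ∧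
      w' = splice w j (up a) (dn b) := by
  classical
  obtain ⟨hw, hw', ⟨hle, hnle⟩, hmin⟩ := hc
  obtain ⟨hlen, hbal, hpos⟩ := (isMotzkin_iff n w).1 hw
  obtain ⟨hlen', hbal', hpos'⟩ := (isMotzkin_iff n w').1 hw'
  set d : ℕ → ℤ := fun i => hgt w' i - hgt w i with hd
  have hd0 : ∀ i, 0 ≤ d i := fun i => by simp only [hd]; have := hle i; change hgt w i ≤ hgt w' i at this; omega
  have hdlen : ∀ i, n ≤ i → d i = 0 := by
    intro i hi
    simp only [hd]
    rw [hgt_of_len_le w i (by omega), hgt_of_len_le w' i (by omega)]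
    omega
  have hex : ∃ i, 1 ≤ d i := by
    by_contra hcon
    push_neg at hcon
    apply hnle
    intro i
    change hgt w' i ≤ hgt w i
    have h1 := hd0 i; have h2 := hcon i
    simp only [hd] at h1 h2; omega
  -- maximum of d over range (n+1)
  obtain ⟨i₀, hi₀mem, hi₀max⟩ := Finset.exists_max_image (Finset.range (n+1)) d
    ⟨0, Finset.mem_range.2 (by omega)⟩
  have hmax_all : ∀ i, d i ≤ d i₀ := by
    intro i
    rcases le_or_gt i n with h | h
    · exact hi₀max i (Finset.mem_range.2 (by omega))
    · rw [hdlen i (by omega)]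
      exact hd0 i₀
  have hmaxpos : 1 ≤ d i₀ := le_trans hex.choose_spec (hmax_all _)
  -- the set T of maximal indices which are "left-ok"
  set T := (Finset.range (n+1)).filter
    (fun jj => d jj = d i₀ ∧ hgt w jj ≤ hgt w (jj - 1)) with hT
  -- min of maximal set is left-ok
  have hminmax : ∃ jj ∈ T, True := by
    set S := (Finset.range (n+1)).filter (fun jj => d jj = d i₀) with hS
    have hSne : S.Nonempty := ⟨i₀, by simp [hS, hi₀mem]⟩
    obtain ⟨m, hmS, hmmin⟩ := S.exists_min_image id hSne
    have hmS' := Finset.mem_filter.1 hmS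
    have hm1 : 1 ≤ m := by
      rcases Nat.eq_zero_or_pos m with h | h
      · exfalso
        have : d 0 = 0 := by simp only [hd, hgt_zero]; omega
        have := hmS'.2; rw [h] at this; omega
      · exact h
    refine ⟨m, ?_, trivial⟩
    rw [hT, Finset.mem_filter]
    refine ⟨hmS'.1, hmS'.2, ?_⟩
    -- left-ok at m
    by_contra hcon
    push_neg at hcon
    have hstepw := hgt_step w (m-1)
    have hstepw' := hgt_step w' (m-1)
    rw [Nat.sub_add_cancel hm1] at hstepw hstepw'
    -- hgt w m = hgt w (m-1) + 1, so d (m-1) ≥ d m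
    have : d i₀ ≤ d (m-1) := by
      have h9 := hmS'.2
      simp only [hd] at h9 ⊢
      omega
    have hdm1 : d (m-1) = d i₀ := le_antisymm (hmax_all _) this
    have hmn : m < n + 1 := Finset.mem_range.1 hmS'.1
    have : (m - 1) ∈ S := by
      rw [hS, Finset.mem_filter]
      exact ⟨Finset.mem_range.2 (by omega), hdm1⟩
    have := hmmin _ this
    simp at this
    omega
  obtain ⟨_, hTne', _⟩ := hminmax
  have hTne : T.Nonempty := ⟨_, hTne'⟩
  set i₁ := T.max' hTne with hi₁
  have hi₁T := T.max'_mem hTne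
  have hi₁T' := Finset.mem_filter.1 hi₁T
  have hi₁max : d i₁ = d i₀ := hi₁T'.2.1
  have hi₁left : hgt w i₁ ≤ hgt w (i₁ - 1) := hi₁T'.2.2
  have hi₁pos : 1 ≤ i₁ := by
    rcases Nat.eq_zero_or_pos i₁ with h | h
    · exfalso
      have : d 0 = 0 := by simp only [hd, hgt_zero]; omega
      rw [h] at hi₁max; omega
    · exact h
  have hi₁lt : i₁ < n := by
    rcases lt_or_ge i₁ n with h | h
    · exact h
    · exfalso; have := hdlen i₁ h; omega
  -- right-ok at i₁
  have hi₁right : hgt w i₁ ≤ hgt w (i₁ + 1) := by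
    by_contra hcon
    push_neg at hcon
    have hstepw := hgt_step w i₁
    have hstepw' := hgt_step w' i₁
    have hd1 : d i₀ ≤ d (i₁ + 1) := by
      have h9 := hi₁max
      simp only [hd] at h9 ⊢
      omega
    have hdm1 : d (i₁+1) = d i₀ := le_antisymm (hmax_all _) hd1
    have hmem : (i₁ + 1) ∈ T := by
      rw [hT, Finset.mem_filter]
      refine ⟨Finset.mem_range.2 ?_, hdm1, by rw [Nat.add_sub_cancel]; omega⟩
      -- i₁ + 1 ≤ n
      have : i₁ + 1 ≤ n := by
        rcases le_or_gt (i₁+1) n with h | h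
        · exact h
        · exfalso; have := hdlen (i₁+1) (by omega); omega
      omega
    have := Finset.le_max' T _ hmem
    omega
  -- extract letters
  set j := i₁ - 1 with hj
  have hjlt : j < w.length := by omega
  have hj1lt : j + 1 < w.length := by omega
  have hceq : j + 1 = i₁ := by omega
  have hca : w[j]? = some (w.get ⟨j, hjlt⟩) := List.get?_eq_get hjlt
  have hcb : w[j+1]? = some (w.get ⟨j+1, hj1lt⟩) := List.get?_eq_get hj1lt
  set a := w.get ⟨j, hjlt⟩
  set b := w.get ⟨j+1, hj1lt⟩
  have ea : hgt w (j+1) = hgt w j + δ a := hgt_succ w j a hca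
  have eb : hgt w (j+2) = hgt w (j+1) + δ b := hgt_succ w (j+1) b hcb
  have hda : δ a ≤ 0 := by
    have : hgt w (j+1) ≤ hgt w j := by rw [hceq]; rw [hj] at hi₁left ⊢; omega
    omega
  have hdb : 0 ≤ δ b := by
    have : hgt w (j+1) ≤ hgt w (j+2) := by
      have h2 : j + 2 = i₁ + 1 := by omega
      rw [hceq, h2]; exact hi₁right
    omega
  refine ⟨j, a, b, hca, hcb, hda, hdb, ?_⟩
  -- w' = raise
  set z := splice w j (up a) (dn b) with hz
  have hcov := cover_of_marked hw hca hcb hda hdb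
  rw [← hz] at hcov
  obtain ⟨_, hMz, hLtz, _⟩ := hcov
  have hh := raise_hgt hca hcb hda hdb
  rw [← hz] at hh
  have hlez : PathLe z w' := by
    intro i
    change hgt z i ≤ hgt w' i
    have := hh i
    by_cases hij : i = j + 1
    · rw [hij] at this ⊢
      rw [if_pos rfl] at this
      have h9 : d (j+1) ≥ 1 := by rw [hceq]; omega
      simp only [hd] at h9 ⊢
      omega
    · rw [if_neg hij] at this
      have h9 := hd0 i; simp only [hd] at h9; omega
  have := hmin z hMz
  rw [not_and] at this
  have hnlt := this hLtz
  -- ¬ PathLt z w' and PathLe z w' gives PathLe w' z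
  have hlew : PathLe w' z := by
    by_contra hcon
    exact hnlt ⟨hlez, hcon⟩
  -- heights equal
  have hzlen : z.length = w.length := splice_length _ _ hj1lt
  apply eq_of_hgt (by omega)
  intro i
  have h1 := hlez i; have h2 := hlew i
  change hgt z i ≤ hgt w' i at h1
  change hgt w' i ≤ hgt z i at h2
  omega

def CoversSet (n : ℕ) : Set (List Step × List Step) := {p | Covers (IsMotzkin n) p.1 p.2}

def MarkedSet (n : ℕ) : Set (List Step × ℕ) :=
  {p | IsMotzkin n p.1 ∧ ∃ a b, p.1[p.2]? = some a ∧ p.1[p.2+1]? = some b ∧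
    δ a ≤ 0 ∧ 0 ≤ δ b}

lemma getD_of_get? {w : List Step} {j : ℕ} {a : Step} (h : w[j]? = some a) :
    w.getD j Step.H = a := by
  rw [List.getD_eq_get?, h]; rfl

lemma ncard_covers_eq_marked (n : ℕ) : (CoversSet n).ncard = (MarkedSet n).ncard := by
  symm
  apply Set.ncard_congr
    (f := fun p (_ : p ∈ MarkedSet n) =>
      (p.1, splice p.1 p.2 (up (p.1.getD p.2 Step.H)) (dn (p.1.getD (p.2+1) Step.H))))
  · rintro ⟨w, j⟩ ⟨hM, a, b, ha, hb, hda, hdb⟩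
    simp only [CoversSet, Set.mem_setOf_eq]
    rw [getD_of_get? ha, getD_of_get? hb]
    exact cover_of_marked hM ha hb hda hdb
  · rintro ⟨w, j⟩ ⟨w', j'⟩ ⟨hM, a, b, ha, hb, hda, hdb⟩ ⟨hM', a', b', ha', hb', hda', hdb'⟩ heq
    dsimp only at ha hb hda hdb ha' hb' hda' hdb'
    have h1 : w = w' := congrArg Prod.fst heq
    subst h1
    have h2 := congrArg Prod.snd heq
    simp only at h2
    rw [getD_of_get? ha, getD_of_get? hb, getD_of_get? ha', getD_of_get? hb'] at h2
    by_cases hjj : j = j'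
    · rw [hjj]
    · exfalso
      have e1 := raise_hgt ha hb hda hdb (j+1)
      rw [if_pos rfl] at e1
      have e2 := raise_hgt ha' hb' hda' hdb' (j+1)
      rw [if_neg (show ¬ (j+1 = j'+1) by omega)] at e2
      rw [h2] at e1
      omega
  · rintro ⟨w, w'⟩ hc
    have hc' : Covers (IsMotzkin n) w w' := hc
    obtain ⟨j, a, b, ha, hb, hda, hdb, hsp⟩ := marked_of_cover hc'
    refine ⟨(w, j), ⟨hc'.1, a, b, ha, hb, hda, hdb⟩, ?_⟩
    rw [getD_of_get? ha, getD_of_get? hb]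
    exact congrArg (fun x => (w, x)) hsp.symm

lemma motzkinEdges_eq_ncard (n : ℕ) : motzkinEdges n = (CoversSet n).ncard := by
  rw [← Nat.card_coe_set_eq]
  rfl

def Pref (u : List Step) : Prop := ∀ i, 0 ≤ hgt u i

def CoPref (a : ℤ) (v : List Step) : Prop := (∀ i, 0 ≤ a + hgt v i) ∧ a + height v = 0

def PairSet (m : ℕ) (lo d : ℤ) : Set (List Step × List Step) :=
  {p | p.1.length + p.2.length = m ∧ Pref p.1 ∧ lo ≤ height p.1 ∧
    CoPref (height p.1 + d) p.2}

def ZSet (k : ℕ) : Set (List Step) := {z | z.length = k ∧ height z = -2}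

def mAB (n : ℕ) (a b : Step) : Set (List Step × ℕ) :=
  {p | IsMotzkin n p.1 ∧ p.1[p.2]? = some a ∧ p.1[p.2 + 1]? = some b}

def lo : Step → ℤ := fun a => if a = Step.D then 1 else 0

lemma lo_nonneg (a : Step) : 0 ≤ lo a := by cases a <;> simp [lo]

lemma lo_spec {a : Step} {g : ℤ} (h0 : 0 ≤ g) (h : lo a ≤ g) : 0 ≤ g + δ a := by
  cases a <;> simp [lo, δ] at h ⊢ <;> omega

instance : Fintype Step :=
  { elems := {Step.U, Step.D, Step.H}, complete := fun x => by cases x <;> simp }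

lemma ncard_mAB (n : ℕ) (hn : 2 ≤ n) (a b : Step) :
    (mAB n a b).ncard = (PairSet (n - 2) (lo a) (δ a + δ b)).ncard := by
  apply Set.ncard_congr (f := fun p (_ : p ∈ mAB n a b) => (p.1.take p.2, p.1.drop (p.2 + 2)))
  · rintro ⟨w, j⟩ ⟨hM, ha, hb⟩
    dsimp only at ha hb ⊢
    obtain ⟨hlen, hbal, hpos⟩ := (isMotzkin_iff n w).1 hM
    have hj1 : j + 1 < w.length := (List.get?_eq_some.1 hb).1
    have ea : hgt w (j+1) = hgt w j + δ a := hgt_succ w j a ha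
    have eb : hgt w (j+2) = hgt w (j+1) + δ b := hgt_succ w (j+1) b hb
    have hu : height (w.take j) = hgt w j := rfl
    constructor
    · -- lengths
      rw [List.length_take, List.length_drop]
      omega
    refine ⟨?_, ?_, ?_, ?_⟩
    · intro i; rw [hgt_take]; exact hpos _
    · -- lo ≤ height u
      rw [hu]
      have h1 := hpos (j+1)
      have h2 := hpos j
      cases a <;> simp [lo, δ] at ea ⊢ <;> omega
    · intro i
      dsimp only
      rw [hu, hgt_drop]
      have := hpos (j + 2 + i)
      omega
    · dsimp only
      have e3 : height (w.drop (j+2)) = hgt w w.length - hgt w (j+2) := by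
        have h5 : hgt (w.drop (j+2)) (w.length - (j+2)) = height (w.drop (j+2)) := by
          apply hgt_of_len_le; rw [List.length_drop]
        have h6 := hgt_drop w (j+2) (w.length - (j+2))
        have e1 : j + 2 + (w.length - (j+2)) = w.length := by omega
        rw [e1] at h6
        omega
      rw [hu, e3]
      have e2 : hgt w w.length = height w := hgt_of_len_le _ _ (le_refl _)
      omega
  · rintro ⟨w, j⟩ ⟨w', j'⟩ ⟨hM, ha, hb⟩ ⟨hM', ha', hb'⟩ heq
    dsimp only at ha hb ha' hb'
    have h1 : w.take j = w'.take j' := congrArg Prod.fst heq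
    have h2 : w.drop (j+2) = w'.drop (j'+2) := congrArg Prod.snd heq
    have hj1 : j + 1 < w.length := (List.get?_eq_some.1 hb).1
    have hj1' : j' + 1 < w'.length := (List.get?_eq_some.1 hb').1
    have hjj : j = j' := by
      have e1 : (w.take j).length = j := length_take_of_le (by omega)
      have e2 : (w'.take j').length = j' := length_take_of_le (by omega)
      rw [← e1, ← e2, h1]
    subst hjj
    have hw : w = w.take j ++ a :: b :: w.drop (j+2) := (splice_self ha hb).symm
    have hw' : w' = w'.take j ++ a :: b :: w'.drop (j+2) := (splice_self ha' hb').symm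
    have : w = w' := by rw [hw, hw', h1, h2]
    rw [this]
  · rintro ⟨u, v⟩ ⟨hlen, hPref, hlo, hCo⟩
    dsimp only at hlen hPref hlo hCo
    set w := u ++ a :: b :: v with hwdef
    set j := u.length with hjdef
    have hwlen : w.length = n := by
      rw [hwdef]; simp [List.length_append]; omega
    have hj1 : j + 1 < w.length := by rw [hwlen]; omega
    have htake : w.take j = u := by
      rw [hwdef, hjdef]; exact List.take_left
    have hdrop : w.drop (j+2) = v := by
      rw [hwdef, hjdef]
      have : u.length + 2 = (u ++ [a, b]).length := by simp
      have e : u ++ a :: b :: v = (u ++ [a, b]) ++ v := by simp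
      rw [e, this, List.drop_left]
    have ha : w[j]? = some a := by
      rw [hwdef, hjdef, List.get?_append_right (le_refl _)]
      simp
    have hb : w[j+1]? = some b := by
      rw [hwdef, hjdef, List.get?_append_right (by omega)]
      have : u.length + 1 - u.length = 1 := by omega
      rw [this]
      rfl
    -- height structure
    have hgtj : hgt w j = height u := by
      rw [← htake]; rfl
    have hsp : splice w j a b = w := splice_self ha hb
    have hhigh : ∀ k, hgt w (j + 2 + k) = height u + δ a + δ b + hgt v k := by
      intro k
      conv_lhs => rw [← hsp]
      rw [hgt_splice_high a b hj1, hdrop, hgtj]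
    have hmid : hgt w (j+1) = height u + δ a := by
      conv_lhs => rw [← hsp]
      rw [hgt_splice_mid a b hj1, hgtj]
    have hlow : ∀ i, i ≤ j → hgt w i = hgt u i := by
      intro i hi
      conv_lhs => rw [← hsp]
      rw [hgt_splice_low a b hj1 hi, ← htake, hgt_take]
      congr 1
      omega
    have hM : IsMotzkin n w := by
      rw [isMotzkin_iff]
      refine ⟨hwlen, ?_, ?_⟩
      · have := hhigh v.length
        have e3 : hgt v v.length = height v := hgt_of_len_le _ _ (le_refl _)
        have e4 : j + 2 + v.length = w.length := by rw [hwlen]; omega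
        rw [e4] at this
        have e5 : hgt w w.length = height w := hgt_of_len_le _ _ (le_refl _)
        have := hCo.2
        omega
      · intro i
        rcases le_or_gt i j with hi | hi
        · rw [hlow i hi]; exact hPref i
        · rcases Nat.eq_or_lt_of_le hi with hi' | hi'
          · rw [← hi', hmid]
            have h0 : 0 ≤ height u := by
              have := hPref u.length
              have : hgt u u.length = height u := hgt_of_len_le _ _ (le_refl _)
              have := hPref u.length
              omega
            exact lo_spec h0 hlo
          · obtain ⟨k, rfl⟩ : ∃ k, i = j + 2 + k := ⟨i - (j+2), by omega⟩
            rw [hhigh k]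
            have := hCo.1 k
            omega
    refine ⟨(w, j), ⟨hM, ha, hb⟩, ?_⟩
    dsimp only
    rw [htake, hdrop]

lemma mAB_finite (n : ℕ) (a b : Step) : (mAB n a b).Finite := by
  apply Set.Finite.subset ((List.finite_length_le Step n).prod (Set.finite_le_nat n))
  rintro ⟨w, j⟩ ⟨hM, ha, hb⟩
  dsimp only at ha hb
  obtain ⟨hlen, -, -⟩ := hM
  dsimp only at hlen
  have hj : j < w.length := (List.get?_eq_some.1 ha).1
  constructor
  · simp only [Set.mem_setOf_eq]; omega
  · simp only [Set.mem_setOf_eq]; omega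

lemma pairSet_finite (m : ℕ) (l d : ℤ) : (PairSet m l d).Finite := by
  apply Set.Finite.subset ((List.finite_length_le Step m).prod (List.finite_length_le Step m))
  rintro ⟨u, v⟩ ⟨hlen, _⟩
  dsimp only at hlen
  exact ⟨by simp only [Set.mem_setOf_eq]; omega, by simp only [Set.mem_setOf_eq]; omega⟩

lemma zSet_finite (k : ℕ) : (ZSet k).Finite := by
  apply Set.Finite.subset (List.finite_length_le Step k)
  rintro z ⟨hlen, _⟩
  simp only [Set.mem_setOf_eq]; omega

lemma mAB_disj (n : ℕ) {a b a' b' : Step} (h : ¬ (a = a' ∧ b = b')) :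
    Disjoint (mAB n a b) (mAB n a' b') := by
  rw [Set.disjoint_left]
  rintro ⟨w, j⟩ ⟨_, ha, hb⟩ ⟨_, ha', hb'⟩
  apply h
  constructor
  · have := ha.symm.trans ha'; exact Option.some_inj.1 this
  · have := hb.symm.trans hb'; exact Option.some_inj.1 this

lemma markedSet_eq (n : ℕ) :
    MarkedSet n = (mAB n Step.D Step.U ∪ mAB n Step.D Step.H) ∪
      (mAB n Step.H Step.U ∪ mAB n Step.H Step.H) := by
  ext ⟨w, j⟩
  constructor
  · rintro ⟨hM, a, b, ha, hb, hda, hdb⟩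
    cases a <;> cases b <;> simp [δ] at hda hdb <;>
      first
        | (exact Or.inl (Or.inl ⟨hM, ha, hb⟩))
        | (exact Or.inl (Or.inr ⟨hM, ha, hb⟩))
        | (exact Or.inr (Or.inl ⟨hM, ha, hb⟩))
        | (exact Or.inr (Or.inr ⟨hM, ha, hb⟩))
  · rintro ((⟨hM, ha, hb⟩ | ⟨hM, ha, hb⟩) | (⟨hM, ha, hb⟩ | ⟨hM, ha, hb⟩)) <;>
      exact ⟨hM, _, _, ha, hb, by simp [δ], by simp [δ]⟩

lemma ncard_marked (n : ℕ) :
    (MarkedSet n).ncard = (mAB n Step.D Step.U).ncard + (mAB n Step.D Step.H).ncard +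
      (mAB n Step.H Step.U).ncard + (mAB n Step.H Step.H).ncard := by
  rw [markedSet_eq]
  rw [Set.ncard_union_eq (by
      apply Set.disjoint_union_left.2
      constructor <;> apply Set.disjoint_union_right.2 <;>
        exact ⟨mAB_disj n (by simp), mAB_disj n (by simp)⟩)
    ((mAB_finite n _ _).union (mAB_finite n _ _))
    ((mAB_finite n _ _).union (mAB_finite n _ _))]
  rw [Set.ncard_union_eq (mAB_disj n (by simp)) (mAB_finite n _ _) (mAB_finite n _ _)]
  rw [Set.ncard_union_eq (mAB_disj n (by simp)) (mAB_finite n _ _) (mAB_finite n _ _)]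
  ring

def flip : Step → Step | Step.U => Step.D | Step.D => Step.U | Step.H => Step.H

def rf (v : List Step) : List Step := (v.map flip).reverse

lemma flip_flip (c : Step) : flip (flip c) = c := by cases c <;> rfl

lemma rf_rf (v : List Step) : rf (rf v) = v := by
  unfold rf
  rw [← List.map_reverse, List.reverse_reverse, List.map_map]
  have : flip ∘ flip = id := funext flip_flip
  rw [this, List.map_id]

lemma length_rf (v : List Step) : (rf v).length = v.length := by simp [rf]

lemma height_map_flip (v : List Step) : height (v.map flip) = - height v := by
  unfold height
  have h1 : (v.map flip).count Step.U = v.count Step.D := by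
    have : Step.U = flip Step.D := rfl
    rw [this, List.count_map_of_injective _ flip (fun a b => by cases a <;> cases b <;> simp [flip])]
  have h2 : (v.map flip).count Step.D = v.count Step.U := by
    have : Step.D = flip Step.U := rfl
    rw [this, List.count_map_of_injective _ flip (fun a b => by cases a <;> cases b <;> simp [flip])]
  rw [h1, h2]; ring

lemma height_reverse (v : List Step) : height v.reverse = height v := by
  unfold height; rw [List.count_reverse, List.count_reverse]

lemma height_rf (v : List Step) : height (rf v) = - height v := by
  unfold rf; rw [height_reverse, height_map_flip]

lemma hgt_rf (v : List Step) (i : ℕ) :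
    hgt (rf v) i = height (v.take (v.length - i)) - height v := by
  unfold hgt rf
  rw [List.take_reverse, height_reverse, ← List.map_drop, height_map_flip]
  simp only [List.length_map]
  have : height (v.take (v.length - i)) + height (v.drop (v.length - i)) = height v := by
    rw [← height_append, List.take_append_drop]
  omega

lemma rf_pref {a : ℤ} {v : List Step} (h : CoPref a v) :
    Pref (rf v) ∧ height (rf v) = a := by
  obtain ⟨h1, h2⟩ := h
  constructor
  · intro i
    rw [hgt_rf]
    have := h1 (v.length - i)
    unfold hgt at this
    omega
  · rw [height_rf]; omega

lemma rf_copref {u : List Step} (h : Pref u) : CoPref (height u) (rf u) := by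
  constructor
  · intro i
    rw [hgt_rf]
    have := h (u.length - i)
    unfold hgt at this
    omega
  · rw [height_rf]; omega

/-- rf-swap bijection between gap (-1) pairs and gap (+1) pairs. -/
lemma ncard_pDH_eq_pHU (m : ℕ) :
    (PairSet m 1 (-1)).ncard = (PairSet m 0 1).ncard := by
  apply Set.ncard_congr (f := fun p (_ : p ∈ PairSet m 1 (-1)) => (rf p.2, rf p.1))
  · rintro ⟨u, v⟩ ⟨hlen, hPref, hlo, hCo⟩
    dsimp only at hlen hPref hlo hCo ⊢
    obtain ⟨hP2, hh2⟩ := rf_pref hCo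
    refine ⟨?_, hP2, ?_, ?_⟩
    · rw [length_rf, length_rf]; omega
    · rw [hh2]
      omega
    · rw [hh2]
      have := rf_copref hPref
      have e : height u + -1 + 1 = height u := by ring
      rw [e]
      exact this
  · rintro ⟨u, v⟩ ⟨u', v'⟩ _ _ heq
    have h1 : rf v = rf v' := congrArg Prod.fst heq
    have h2 : rf u = rf u' := congrArg Prod.snd heq
    have e1 : v = v' := by rw [← rf_rf v, ← rf_rf v', h1]
    have e2 : u = u' := by rw [← rf_rf u, ← rf_rf u', h2]
    rw [e1, e2]
  · rintro ⟨U, V⟩ ⟨hlen, hPref, hlo, hCo⟩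
    dsimp only at hlen hPref hlo hCo
    refine ⟨(rf V, rf U), ?_, ?_⟩
    · obtain ⟨hP2, hh2⟩ := rf_pref hCo
      refine ⟨?_, hP2, ?_, ?_⟩
      · dsimp only; rw [length_rf, length_rf]; omega
      · dsimp only; rw [hh2]; omega
      · dsimp only
        rw [hh2]
        have := rf_copref hPref
        have e : height U + 1 + -1 = height U := by ring
        rw [e]
        exact this
    · dsimp only; rw [rf_rf, rf_rf]

lemma hgt_cons (c : Step) (u : List Step) (k : ℕ) :
    hgt (c :: u) (k + 1) = δ c + hgt u k := by
  show height ((c :: u).take (k+1)) = _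
  rw [List.take_succ_cons]
  have : height (c :: u.take k) = δ c + height (u.take k) := by
    have e : c :: u.take k = [c] ++ u.take k := rfl
    rw [e, height_append, height_single]
  rw [this]; rfl

lemma rot_heights {u v : List Step} (hPref : Pref u) (hg : 0 ≤ height u)
    (hCo : CoPref (height u + 1) v) :
    (∀ i, i ≤ v.length → -(height u) - 1 ≤ hgt (v ++ Step.D :: u) i) ∧
    hgt (v ++ Step.D :: u) (v.length + 1) = -(height u) - 2 ∧
    (∀ k, -(height u) - 2 ≤ hgt (v ++ Step.D :: u) (v.length + 1 + k)) := by
  obtain ⟨hCo1, hCo2⟩ := hCo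
  refine ⟨?_, ?_, ?_⟩
  · intro i hi
    rw [hgt_append_left _ _ _ (by omega)]
    have := hCo1 i
    omega
  · have e : v.length + 1 = v.length + 1 := rfl
    rw [hgt_append_right v (Step.D :: u) 1, hgt_cons, hgt_zero]
    simp [δ]
    omega
  · intro k
    have e : v.length + 1 + k = v.length + (1 + k) := by omega
    rw [e, hgt_append_right v (Step.D :: u) (1 + k)]
    have e2 : 1 + k = k + 1 := by omega
    rw [e2, hgt_cons]
    have := hPref k
    simp [δ]
    omega

lemma ncard_pHU_eq_Z (m : ℕ) :
    (PairSet m 0 1).ncard = (ZSet (m + 1)).ncard := by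
  apply Set.ncard_congr (f := fun p (_ : p ∈ PairSet m 0 1) => p.2 ++ Step.D :: p.1)
  · rintro ⟨u, v⟩ ⟨hlen, hPref, hlo, hCo⟩
    dsimp only at hlen hPref hlo hCo ⊢
    constructor
    · simp only [List.length_append, List.length_cons]; omega
    · have h1 : height (v ++ Step.D :: u) = height v + (-1) + height u := by
        rw [height_append]
        have : height (Step.D :: u) = δ Step.D + height u := by
          have e : Step.D :: u = [Step.D] ++ u := rfl
          rw [e, height_append, height_single]
        rw [this]
        simp [δ]; ring
      rw [h1]
      have := hCo.2
      omega
  · rintro ⟨u, v⟩ ⟨u', v'⟩ ⟨hlen, hPref, hlo, hCo⟩ ⟨hlen', hPref', hlo', hCo'⟩ heq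
    dsimp only at hlen hPref hlo hCo hlen' hPref' hlo' hCo' heq
    obtain ⟨hA, hB, hC⟩ := rot_heights hPref hlo hCo
    obtain ⟨hA', hB', hC'⟩ := rot_heights hPref' hlo' hCo'
    rw [heq] at hA hB hC
    have hvv : v.length = v'.length := by
      by_contra hne
      rcases Nat.lt_or_ge v.length v'.length with hlt | hge
      · -- v.length + 1 ≤ v'.length
        have h1 := hA' (v.length + 1) (by omega)
        rw [hB] at h1
        have h2 := hC (v'.length + 1 - (v.length + 1))
        have e : v.length + 1 + (v'.length + 1 - (v.length + 1)) = v'.length + 1 := by omega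
        rw [e, hB'] at h2
        omega
      · have hge' : v'.length < v.length := by omega
        have h1 := hA (v'.length + 1) (by omega)
        rw [hB'] at h1
        have h2 := hC' (v.length + 1 - (v'.length + 1))
        have e : v'.length + 1 + (v.length + 1 - (v'.length + 1)) = v.length + 1 := by omega
        rw [e, hB] at h2
        omega
    have := List.append_inj heq hvv
    obtain ⟨e1, e2⟩ := this
    have e3 : u = u' := by injection e2
    rw [e1, e3]
  · intro z hz
    obtain ⟨hzlen, hzh⟩ := hz
    obtain ⟨i₀, hi₀, hmin⟩ := Finset.exists_min_image (Finset.range (z.length + 1)) (hgt z)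
      ⟨0, Finset.mem_range.2 (by omega)⟩
    set μ := hgt z i₀ with hμ
    have hminall : ∀ i, μ ≤ hgt z i := by
      intro i
      rcases le_or_gt i z.length with h | h
      · exact hmin i (Finset.mem_range.2 (by omega))
      · rw [hgt_of_len_le z i (by omega)]
        have := hmin z.length (Finset.mem_range.2 (by omega))
        rw [hgt_of_len_le z z.length (le_refl _)] at this
        omega
    have hzlenh : hgt z z.length = -2 := by
      rw [hgt_of_len_le z z.length (le_refl _)]; omega
    have hμ2 : μ ≤ -2 := by
      have := hmin z.length (Finset.mem_range.2 (by omega))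
      omega
    have h0 : μ < hgt z 0 := by rw [hgt_zero]; omega
    obtain ⟨j, hj0, hjlen, hjμ, hjfirst, hjD⟩ :=
      exists_first_passage z μ ⟨i₀, le_refl _⟩ h0
    set u := z.drop j with hu
    set v := z.take (j - 1) with hv
    have hul : u.length = z.length - j := by rw [hu, List.length_drop]
    have hvl : v.length = j - 1 := by rw [hv, List.length_take]; omega
    have hgtu : ∀ i, hgt u i = hgt z (j + i) - μ := by
      intro i; rw [hu, hgt_drop, hjμ]
    have hheightu : height u = -2 - μ := by
      rw [← hgt_of_len_le u u.length (le_refl _), hgtu, hul]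
      have e : j + (z.length - j) = z.length := by omega
      rw [e, hzlenh]
    have hprev : hgt z (j - 1) = μ + 1 := by
      have h1 := hjfirst (j-1) (by omega)
      have hc : z[j-1]? = some Step.D := hjD
      have e := hgt_succ z (j-1) Step.D hc
      rw [Nat.sub_add_cancel hj0] at e
      simp [δ] at e
      omega
    have hgtv : ∀ i, hgt v i = hgt z (min i (j-1)) := by
      intro i; rw [hv, hgt_take]
    have hheightv : height v = μ + 1 := by
      rw [← hgt_of_len_le v v.length (le_refl _), hgtv, hvl, min_self, hprev]
    refine ⟨(u, v), ⟨?_, ?_, ?_, ?_⟩, ?_⟩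
    · dsimp only; omega
    · intro i
      rw [hgtu]
      have := hminall (j + i)
      omega
    · dsimp only; rw [hheightu]; omega
    · dsimp only
      constructor
      · intro i
        rw [hgtv, hheightu]
        have h1 := hjfirst (min i (j-1)) (by omega)
        omega
      · rw [hheightu, hheightv]; ring
    · dsimp only
      have hsplit : z = z.take (j-1) ++ z.drop (j-1) := (List.take_append_drop _ _).symm
      have hj1len : j - 1 < z.length := by omega
      have hdropc : z.drop (j-1) = Step.D :: z.drop j := by
        rw [List.drop_eq_get_cons hj1len]
        have hc : z[j-1]? = some (z.get ⟨j-1, hj1len⟩) := List.get?_eq_get hj1len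
        rw [hc] at hjD
        have : z.get ⟨j-1, hj1len⟩ = Step.D := Option.some_inj.1 hjD
        rw [this, Nat.sub_add_cancel hj0]
      rw [hu, hv, ← hdropc]
      exact hsplit.symm

lemma copref_cons {a : ℤ} {c : Step} {v : List Step} :
    CoPref a (c :: v) ↔ 0 ≤ a ∧ CoPref (a + δ c) v := by
  constructor
  · rintro ⟨h1, h2⟩
    have h0 := h1 0
    rw [hgt_zero] at h0
    refine ⟨by omega, ?_, ?_⟩
    · intro i
      have := h1 (i + 1)
      rw [hgt_cons] at this
      omega
    · have : height (c :: v) = δ c + height v := by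
        have e : c :: v = [c] ++ v := rfl
        rw [e, height_append, height_single]
      omega
  · rintro ⟨h0, h1, h2⟩
    constructor
    · intro i
      cases i with
      | zero => rw [hgt_zero]; omega
      | succ k => rw [hgt_cons]; have := h1 k; omega
    · have : height (c :: v) = δ c + height v := by
        have e : c :: v = [c] ++ v := rfl
        rw [e, height_append, height_single]
      omega

def HeadSet (m : ℕ) (c : Step) : Set (List Step × List Step) :=
  {p | p ∈ PairSet (m + 1) 0 1 ∧ p.2.head? = some c}

lemma headSet_ncard (m : ℕ) (c : Step) :
    (HeadSet m c).ncard = (PairSet m 0 (1 + δ c)).ncard := by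
  apply Set.ncard_congr (f := fun p (_ : p ∈ HeadSet m c) => (p.1, p.2.tail))
  · rintro ⟨u, v⟩ ⟨⟨hlen, hPref, hlo, hCo⟩, hhead⟩
    dsimp only at hlen hPref hlo hCo hhead ⊢
    match v, hhead with
    | c' :: v₂, hhead =>
      have hc : c' = c := by injection hhead
      subst hc
      rw [copref_cons] at hCo
      rw [List.length_cons] at hlen
      refine ⟨?_, hPref, hlo, ?_⟩
      · show u.length + v₂.length = m
        omega
      · show CoPref (height u + (1 + δ c')) v₂
        have e : height u + (1 + δ c') = height u + 1 + δ c' := by ring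
        rw [e]
        exact hCo.2
  · rintro ⟨u, v⟩ ⟨u', v'⟩ ⟨_, hhead⟩ ⟨_, hhead'⟩ heq
    dsimp only at hhead hhead' heq
    have h1 : u = u' := congrArg Prod.fst heq
    have h2 : v.tail = v'.tail := congrArg Prod.snd heq
    match v, v', hhead, hhead' with
    | a :: t, a' :: t', hh, hh' =>
      have e1 : a = c := by injection hh
      have e2 : a' = c := by injection hh'
      simp only [List.tail_cons] at h2
      rw [h1, h2, e1, e2]
  · rintro ⟨u, v⟩ ⟨hlen, hPref, hlo, hCo⟩
    dsimp only at hlen hPref hlo hCo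
    refine ⟨(u, c :: v), ⟨⟨?_, hPref, hlo, ?_⟩, rfl⟩, rfl⟩
    · show u.length + (c :: v).length = m + 1
      rw [List.length_cons]; omega
    · show CoPref (height u + 1) (c :: v)
      rw [copref_cons]
      refine ⟨by omega, ?_⟩
      have e : height u + 1 + δ c = height u + (1 + δ c) := by ring
      rw [e]
      exact hCo

lemma headSet_finite (m : ℕ) (c : Step) : (HeadSet m c).Finite :=
  Set.Finite.subset (pairSet_finite (m+1) 0 1) (fun p hp => hp.1)

lemma pHU_partition (m : ℕ) :
    PairSet (m + 1) 0 1 = (HeadSet m Step.D ∪ HeadSet m Step.H) ∪ HeadSet m Step.U := by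
  ext ⟨u, v⟩
  constructor
  · intro hp
    have hlo : (0:ℤ) ≤ height u := hp.2.2.1
    have hCo : CoPref (height u + 1) v := hp.2.2.2
    have hvne : v ≠ [] := by
      intro hv
      rw [hv] at hCo
      have h9 := hCo.2
      rw [height_nil] at h9
      omega
    match v, hvne with
    | c :: v₂, _ =>
      cases c
      · exact Or.inr ⟨hp, rfl⟩
      · exact Or.inl (Or.inl ⟨hp, rfl⟩)
      · exact Or.inl (Or.inr ⟨hp, rfl⟩)
  · rintro ((⟨hp, _⟩ | ⟨hp, _⟩) | ⟨hp, _⟩) <;> exact hp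

lemma headSet_disj {m : ℕ} {c c' : Step} (h : c ≠ c') :
    Disjoint (HeadSet m c) (HeadSet m c') := by
  rw [Set.disjoint_left]
  rintro p ⟨_, h1⟩ ⟨_, h2⟩
  rw [h1] at h2
  exact h (Option.some_inj.1 h2)

lemma ncard_pHU_succ (m : ℕ) :
    (PairSet (m+1) 0 1).ncard =
      (PairSet m 0 0).ncard + (PairSet m 0 1).ncard + (PairSet m 0 2).ncard := by
  rw [pHU_partition m]
  rw [Set.ncard_union_eq (by
      apply Set.disjoint_union_left.2
      exact ⟨headSet_disj (by simp), headSet_disj (by simp)⟩)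
    ((headSet_finite m _).union (headSet_finite m _)) (headSet_finite m _)]
  rw [Set.ncard_union_eq (headSet_disj (by simp)) (headSet_finite m _) (headSet_finite m _)]
  have e1 := headSet_ncard m Step.D
  have e2 := headSet_ncard m Step.H
  have e3 := headSet_ncard m Step.U
  simp only [δ] at e1 e2 e3
  rw [e1, e2, e3]
  norm_num

lemma height_cons (c : Step) (v : List Step) : height (c :: v) = δ c + height v := by
  have e : c :: v = [c] ++ v := rfl
  rw [e, height_append, height_single]

def lastVisit (u : List Step) : ℕ :=
  Nat.findGreatest (fun j => hgt u j ≤ height u - 1) u.length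

lemma lastVisit_spec (u : List Step) (hh : 1 ≤ height u) :
    lastVisit u < u.length ∧ hgt u (lastVisit u) = height u - 1 ∧
    u[lastVisit u]? = some Step.U ∧
    ∀ i, lastVisit u < i → i ≤ u.length → height u ≤ hgt u i := by
  classical
  set h := height u with hhd
  have hbase : hgt u 0 ≤ h - 1 := by rw [hgt_zero]; omega
  set P : ℕ → Prop := fun j => hgt u j ≤ h - 1 with hP
  set j := lastVisit u with hj
  have hjle : j ≤ u.length := Nat.findGreatest_le _
  have hPj : P j := Nat.findGreatest_spec (Nat.zero_le _) hbase
  have hgr : ∀ m, j < m → m ≤ u.length → ¬ P m := fun m h1 h2 =>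
    Nat.findGreatest_is_greatest h1 h2
  have hPlen : ¬ P u.length := by
    have e : hgt u u.length = h := by rw [hgt_of_len_le u u.length (le_refl _)]
    simp only [hP, e]; omega
  have hjlt : j < u.length := by
    rcases lt_or_eq_of_le hjle with h' | h'
    · exact h'
    · exact absurd (h' ▸ hPj) hPlen
  have hafter : ∀ i, j < i → i ≤ u.length → h ≤ hgt u i := by
    intro i h1 h2
    have := hgr i h1 h2
    simp only [hP, not_le] at this
    omega
  have hnext : h ≤ hgt u (j+1) := hafter _ (by omega) (by omega)
  have hstep := hgt_step u j
  have hgtj : hgt u j = h - 1 := by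
    have : hgt u j ≤ h - 1 := hPj
    omega
  have hc : u[j]? = some (u.get ⟨j, hjlt⟩) := List.get?_eq_get hjlt
  have e := hgt_succ u j _ hc
  have hδ : δ (u.get ⟨j, hjlt⟩) = 1 := by omega
  have hU : u.get ⟨j, hjlt⟩ = Step.U := by
    cases hg : u.get ⟨j, hjlt⟩ <;> rw [hg] at hδ <;> simp [δ] at hδ <;> try rfl
  exact ⟨hjlt, hgtj, by rw [hc, hU], hafter⟩

lemma lastVisit_eq (u : List Step) (hh : 1 ≤ height u) (t : ℕ) (ht : t ≤ u.length)
    (h1 : hgt u t = height u - 1)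
    (h2 : ∀ i, t < i → i ≤ u.length → height u ≤ hgt u i) : lastVisit u = t := by
  obtain ⟨hlt, he, _, hafter⟩ := lastVisit_spec u hh
  rcases lt_trichotomy (lastVisit u) t with hc | hc | hc
  · have := hafter t hc ht
    omega
  · exact hc
  · have := h2 (lastVisit u) hc (by omega)
    omega

lemma ncard_pDU_eq_pG2 (m : ℕ) :
    (PairSet m 1 0).ncard = (PairSet m 0 2).ncard := by
  apply Set.ncard_congr
    (f := fun p (_ : p ∈ PairSet m 1 0) =>
      (p.1.take (lastVisit p.1), p.1.drop (lastVisit p.1 + 1) ++ Step.D :: p.2))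
  -- helper facts are re-derived in each branch
  · rintro ⟨u, v⟩ ⟨hlen, hPref, hlo, hCo⟩
    dsimp only at hlen hPref hlo hCo ⊢
    set h := height u with hhd
    obtain ⟨htlt, hte, htU, htafter⟩ := lastVisit_spec u hlo
    set t := lastVisit u with htd
    have hnext : hgt u (t+1) = h := by
      have e := hgt_succ u t Step.U htU
      simp [δ] at e
      omega
    have hV₁ : ∀ k, hgt (u.drop (t+1)) k = hgt u (t+1+k) - h := by
      intro k; rw [hgt_drop, hnext]
    have hV₁pos : ∀ k, 0 ≤ hgt (u.drop (t+1)) k := by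
      intro k
      rw [hV₁]
      rcases le_or_gt (t+1+k) u.length with hk | hk
      · have := htafter (t+1+k) (by omega) hk; omega
      · rw [hgt_of_len_le u _ (by omega)]; omega
    have hV₁h : height (u.drop (t+1)) = 0 := by
      rw [← hgt_of_len_le (u.drop (t+1)) (u.drop (t+1)).length (le_refl _), hV₁]
      rw [List.length_drop]
      have e : t + 1 + (u.length - (t+1)) = u.length := by omega
      rw [e, hgt_of_len_le u _ (le_refl _)]
      omega
    have hUh : height (u.take t) = h - 1 := hte
    refine ⟨?_, ?_, ?_, ?_, ?_⟩
    · rw [List.length_take, List.length_append, List.length_drop, List.length_cons]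
      omega
    · intro i; rw [hgt_take]; exact hPref _
    · rw [hUh]; omega
    · -- CoPref prefix condition
      intro i
      rw [hUh]
      rcases le_or_gt i (u.drop (t+1)).length with hi | hi
      · rw [hgt_append_left _ _ _ hi]
        have := hV₁pos i
        omega
      · obtain ⟨k, hk⟩ : ∃ k, i = (u.drop (t+1)).length + (k + 1) :=
          ⟨i - (u.drop (t+1)).length - 1, by omega⟩
        rw [hk, hgt_append_right, hgt_cons, hV₁h]
        have := hCo.1 k
        simp [δ]
        omega
    · rw [hUh, height_append, height_cons, hV₁h]
      have := hCo.2
      simp [δ]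
      omega
  · rintro ⟨u, v⟩ ⟨u', v'⟩ ⟨hlen, hPref, hlo, hCo⟩ ⟨hlen', hPref', hlo', hCo'⟩ heq
    dsimp only at hlen hPref hlo hCo hlen' hPref' hlo' hCo' heq
    obtain ⟨htlt, hte, htU, htafter⟩ := lastVisit_spec u hlo
    obtain ⟨htlt', hte', htU', htafter'⟩ := lastVisit_spec u' hlo'
    set t := lastVisit u with htd
    set t' := lastVisit u' with htd'
    have h1 : u.take t = u'.take t' := congrArg Prod.fst heq
    have h2 : u.drop (t+1) ++ Step.D :: v = u'.drop (t'+1) ++ Step.D :: v' :=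
      congrArg Prod.snd heq
    have htt : t = t' := by
      have e1 : (u.take t).length = t := length_take_of_le (by omega)
      have e2 : (u'.take t').length = t' := length_take_of_le (by omega)
      rw [← e1, ← e2, h1]
    rw [← htt] at htlt' hte' htU' htafter' h2
    -- heights of the second component characterize the cut
    have hnext : hgt u (t+1) = height u := by
      have e := hgt_succ u t Step.U htU; simp [δ] at e; omega
    have hnext' : hgt u' (t+1) = height u' := by
      have e := hgt_succ u' t Step.U htU'; simp [δ] at e; omega
    have hposV : ∀ (w : List Step) (vv : List Step), (∀ k, 0 ≤ hgt w k) → height w = 0 →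
        (∀ i, i ≤ w.length → 0 ≤ hgt (w ++ Step.D :: vv) i) ∧
          hgt (w ++ Step.D :: vv) (w.length + 1) = -1 := by
      intro w vv hw hwh
      constructor
      · intro i hi
        rw [hgt_append_left _ _ _ hi]
        exact hw i
      · rw [hgt_append_right, hgt_cons, hgt_zero, hwh]
        simp [δ]
    have hwpos : ∀ k, 0 ≤ hgt (u.drop (t+1)) k := by
      intro k
      rw [hgt_drop, hnext]
      rcases le_or_gt (t+1+k) u.length with hk | hk
      · have := htafter (t+1+k) (by omega) hk; omega
      · rw [hgt_of_len_le u _ (by omega)]; omega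
    have hwpos' : ∀ k, 0 ≤ hgt (u'.drop (t+1)) k := by
      intro k
      rw [hgt_drop, hnext']
      rcases le_or_gt (t+1+k) u'.length with hk | hk
      · have := htafter' (t+1+k) (by omega) hk; omega
      · rw [hgt_of_len_le u' _ (by omega)]; omega
    have hwh : height (u.drop (t+1)) = 0 := by
      rw [← hgt_of_len_le (u.drop (t+1)) _ (le_refl _), hgt_drop, hnext, List.length_drop]
      have e : t + 1 + (u.length - (t+1)) = u.length := by omega
      rw [e, hgt_of_len_le u _ (le_refl _)]
      omega
    have hwh' : height (u'.drop (t+1)) = 0 := by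
      rw [← hgt_of_len_le (u'.drop (t+1)) _ (le_refl _), hgt_drop, hnext', List.length_drop]
      have e : t + 1 + (u'.length - (t+1)) = u'.length := by omega
      rw [e, hgt_of_len_le u' _ (le_refl _)]
      omega
    obtain ⟨hA, hB⟩ := hposV (u.drop (t+1)) v hwpos hwh
    obtain ⟨hA', hB'⟩ := hposV (u'.drop (t+1)) v' hwpos' hwh'
    rw [h2] at hA hB
    have hll : (u.drop (t+1)).length = (u'.drop (t+1)).length := by
      by_contra hne
      rcases Nat.lt_or_ge (u.drop (t+1)).length (u'.drop (t+1)).length with hlt | hge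
      · have := hA' ((u.drop (t+1)).length + 1) (by omega)
        rw [hB] at this
        omega
      · have hge' : (u'.drop (t+1)).length < (u.drop (t+1)).length := by omega
        have := hA ((u'.drop (t+1)).length + 1) (by omega)
        rw [hB'] at this
        omega
    obtain ⟨e1, e2⟩ := List.append_inj h2 hll
    have e3 : v = v' := by injection e2
    have hurec : u = u.take t ++ Step.U :: u.drop (t+1) := by
      conv_lhs => rw [← List.take_append_drop t u]
      congr 1
      rw [List.drop_eq_get_cons htlt]
      have hc : u[t]? = some (u.get ⟨t, htlt⟩) := List.get?_eq_get htlt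
      rw [hc] at htU
      rw [Option.some_inj.1 htU]
    have hurec' : u' = u'.take t ++ Step.U :: u'.drop (t+1) := by
      conv_lhs => rw [← List.take_append_drop t u']
      congr 1
      rw [List.drop_eq_get_cons htlt']
      have hc : u'[t]? = some (u'.get ⟨t, htlt'⟩) := List.get?_eq_get htlt'
      rw [hc] at htU'
      rw [Option.some_inj.1 htU']
    have e4 : u = u' := by rw [hurec, hurec', h1, e1, ← htt]
    rw [e3, e4]
  · rintro ⟨U, V⟩ ⟨hlen, hPref, hlo, hCo⟩
    dsimp only at hlen hPref hlo hCo
    set g := height U with hgd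
    -- first passage of V to -1
    have hex : ∃ i, hgt V i ≤ -1 := by
      refine ⟨V.length, ?_⟩
      rw [hgt_of_len_le V _ (le_refl _)]
      have := hCo.2
      omega
    have h0 : (-1 : ℤ) < hgt V 0 := by rw [hgt_zero]; omega
    obtain ⟨s, hs0, hslen, hsval, hsfirst, hsD⟩ := exists_first_passage V (-1) hex h0
    have hprev : hgt V (s-1) = 0 := by
      have h1 := hsfirst (s-1) (by omega)
      have e := hgt_succ V (s-1) Step.D hsD
      rw [Nat.sub_add_cancel hs0] at e
      simp [δ] at e
      omega
    set V₁ := V.take (s-1) with hV₁d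
    set v := V.drop s with hvd
    set u := U ++ Step.U :: V₁ with hud
    have hV₁len : V₁.length = s - 1 := by rw [hV₁d, List.length_take]; omega
    have hV₁hgt : ∀ k, hgt V₁ k = hgt V (min k (s-1)) := by
      intro k; rw [hV₁d, hgt_take]
    have hV₁pos : ∀ k, 0 ≤ hgt V₁ k := by
      intro k
      rw [hV₁hgt]
      rcases Nat.eq_or_lt_of_le (min_le_right k (s-1)) with he | hl
      · rw [he, hprev]
      · have := hsfirst (min k (s-1)) (by omega)
        omega
    have hV₁h : height V₁ = 0 := by
      rw [← hgt_of_len_le V₁ _ (le_refl _), hV₁hgt, hV₁len, min_self, hprev]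
    have huh : height u = g + 1 := by
      rw [hud, height_append, height_cons, hV₁h]
      simp [δ, hgd]
    have hupref : Pref u := by
      intro i
      rcases le_or_gt i U.length with hi | hi
      · rw [hud, hgt_append_left _ _ _ hi]
        exact hPref i
      · obtain ⟨k, hk⟩ : ∃ k, i = U.length + (k + 1) := ⟨i - U.length - 1, by omega⟩
        rw [hud, hk, hgt_append_right, hgt_cons]
        have := hV₁pos k
        simp [δ]
        omega
    have hulen : u.length = U.length + 1 + V₁.length := by
      rw [hud]; simp [List.length_append]; omega
    have hugt : ∀ i, U.length < i → i ≤ u.length → height u ≤ hgt u i := by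
      intro i hi1 hi2
      obtain ⟨k, hk⟩ : ∃ k, i = U.length + (k + 1) := ⟨i - U.length - 1, by omega⟩
      rw [hud, hk, hgt_append_right, hgt_cons, huh]
      have := hV₁pos k
      simp [δ]
      omega
    have hutake : hgt u U.length = g := by
      rw [hud, hgt_append_left _ _ _ (le_refl _)]
      rw [← hgt_of_len_le U _ (le_refl _)] at hgd
      omega
    have hlv : lastVisit u = U.length := by
      apply lastVisit_eq u (by omega) U.length (by omega)
      · rw [hutake, huh]; ring
      · intro i h1 h2; exact hugt i h1 h2
    refine ⟨(u, v), ⟨?_, hupref, ?_, ?_, ?_⟩, ?_⟩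
    · show u.length + v.length = m
      rw [hulen, hvd, List.length_drop]
      omega
    · show (1:ℤ) ≤ height u
      rw [huh]; omega
    · -- CoPref prefix for v
      intro i
      show 0 ≤ height u + 0 + hgt v i
      rw [huh, hvd, hgt_drop, hsval]
      have := hCo.1 (s + i)
      omega
    · show height u + 0 + height v = 0
      rw [huh, hvd]
      have e1 : height (V.drop s) = hgt (V.drop s) (V.drop s).length :=
        (hgt_of_len_le _ _ (le_refl _)).symm
      rw [e1, hgt_drop, hsval, List.length_drop]
      have e : s + (V.length - s) = V.length := by omega
      rw [e, hgt_of_len_le V _ (le_refl _)]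
      have := hCo.2
      omega
    · -- image equals (U, V)
      dsimp only
      rw [hlv]
      have htake : u.take U.length = U := by rw [hud]; exact List.take_left
      have hdrop : u.drop (U.length + 1) = V₁ := by
        rw [hud]
        have e : U ++ Step.U :: V₁ = (U ++ [Step.U]) ++ V₁ := by simp
        have e2 : U.length + 1 = (U ++ [Step.U]).length := by simp
        rw [e, e2, List.drop_left]
      rw [htake, hdrop]
      have hVrec : V = V₁ ++ Step.D :: v := by
        rw [hV₁d, hvd]
        conv_lhs => rw [← List.take_append_drop (s-1) V]
        congr 1
        have hj1len : s - 1 < V.length := by omega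
        rw [List.drop_eq_get_cons hj1len]
        have hc : V[s-1]? = some (V.get ⟨s-1, hj1len⟩) := List.get?_eq_get hj1len
        rw [hc] at hsD
        rw [Option.some_inj.1 hsD, Nat.sub_add_cancel hs0]
      rw [← hVrec]

def Wset (k : ℕ) (s : ℤ) : Set (List Step) := {z | z.length = k ∧ height z = s}

lemma wset_finite (k : ℕ) (s : ℤ) : (Wset k s).Finite := by
  apply Set.Finite.subset (List.finite_length_le Step k)
  rintro z ⟨hlen, _⟩
  simp only [Set.mem_setOf_eq]; omega

lemma wset_empty {k : ℕ} {s : ℤ} (h : s < -(k:ℤ) ∨ (k:ℤ) < s) : Wset k s = ∅ := by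
  ext z
  simp only [Wset, Set.mem_setOf_eq, Set.mem_empty_iff_false, iff_false, not_and]
  intro hlen
  have := height_le_length z
  intro hh
  rw [hh, hlen] at this
  omega

def WHead (k : ℕ) (s : ℤ) (c : Step) : Set (List Step) :=
  {z | z ∈ Wset (k + 1) s ∧ z.head? = some c}

lemma wHead_ncard (k : ℕ) (s : ℤ) (c : Step) :
    (WHead k s c).ncard = (Wset k (s - δ c)).ncard := by
  apply Set.ncard_congr (f := fun z (_ : z ∈ WHead k s c) => z.tail)
  · rintro z ⟨⟨hlen, hh⟩, hhead⟩
    match z, hhead with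
    | c' :: z₂, hhead =>
      have hc : c' = c := by injection hhead
      subst hc
      rw [List.length_cons] at hlen
      rw [height_cons] at hh
      show z₂.length = k ∧ height z₂ = s - δ c'
      exact ⟨by omega, by omega⟩
  · rintro z z' ⟨_, hhead⟩ ⟨_, hhead'⟩ heq
    match z, z', hhead, hhead' with
    | a :: t, a' :: t', hh, hh' =>
      have e1 : a = c := by injection hh
      have e2 : a' = c := by injection hh'
      simp only [List.tail_cons] at heq
      rw [e1, e2, heq]
  · rintro z ⟨hlen, hh⟩
    refine ⟨c :: z, ⟨⟨?_, ?_⟩, rfl⟩, rfl⟩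
    · rw [List.length_cons, hlen]
    · rw [height_cons]; omega

lemma wHead_finite (k : ℕ) (s : ℤ) (c : Step) : (WHead k s c).Finite :=
  Set.Finite.subset (wset_finite (k+1) s) (fun z hz => hz.1)

lemma wset_partition (k : ℕ) (s : ℤ) :
    Wset (k+1) s = (WHead k s Step.D ∪ WHead k s Step.H) ∪ WHead k s Step.U := by
  ext z
  constructor
  · intro hz
    have hzne : z ≠ [] := by
      intro h
      have := hz.1
      rw [h] at this
      simp at this
    match z, hzne with
    | c :: z₂, _ =>
      cases c
      · exact Or.inr ⟨hz, rfl⟩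
      · exact Or.inl (Or.inl ⟨hz, rfl⟩)
      · exact Or.inl (Or.inr ⟨hz, rfl⟩)
  · rintro ((⟨hz, _⟩ | ⟨hz, _⟩) | ⟨hz, _⟩) <;> exact hz

lemma wHead_disj {k : ℕ} {s : ℤ} {c c' : Step} (h : c ≠ c') :
    Disjoint (WHead k s c) (WHead k s c') := by
  rw [Set.disjoint_left]
  rintro p ⟨_, h1⟩ ⟨_, h2⟩
  rw [h1] at h2
  exact h (Option.some_inj.1 h2)

lemma ncard_wset_succ (k : ℕ) (s : ℤ) :
    (Wset (k+1) s).ncard =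
      (Wset k (s+1)).ncard + (Wset k s).ncard + (Wset k (s-1)).ncard := by
  rw [wset_partition k s]
  rw [Set.ncard_union_eq (by
      apply Set.disjoint_union_left.2
      exact ⟨wHead_disj (by simp), wHead_disj (by simp)⟩)
    ((wHead_finite k s _).union (wHead_finite k s _)) (wHead_finite k s _)]
  rw [Set.ncard_union_eq (wHead_disj (by simp)) (wHead_finite k s _) (wHead_finite k s _)]
  have e1 := wHead_ncard k s Step.D
  have e2 := wHead_ncard k s Step.H
  have e3 := wHead_ncard k s Step.U
  simp only [δ] at e1 e2 e3
  rw [e1, e2, e3]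
  have f1 : s - -1 = s + 1 := by ring
  have f2 : s - 0 = s := by ring
  rw [f1, f2]

lemma coeff_T_mul (p : Polynomial ℕ) (t : ℕ) :
    ((1 + Polynomial.X + Polynomial.X ^ 2) * p).coeff t
      = p.coeff t + (if 1 ≤ t then p.coeff (t-1) else 0)
        + (if 2 ≤ t then p.coeff (t-2) else 0) := by
  rw [add_mul, add_mul, one_mul, Polynomial.coeff_add, Polynomial.coeff_add]
  have hX2 : (Polynomial.X ^ 2 * p : Polynomial ℕ) = Polynomial.X * (Polynomial.X * p) := by
    ring
  rw [hX2]
  match t with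
  | 0 =>
    simp [Polynomial.coeff_X_mul_zero]
  | 1 =>
    rw [Polynomial.coeff_X_mul]
    simp [Polynomial.coeff_X_mul_zero]
  | (d+2) =>
    rw [Polynomial.coeff_X_mul, Polynomial.coeff_X_mul, Polynomial.coeff_X_mul]
    simp only [if_pos (by omega : 1 ≤ d+2), if_pos (by omega : 2 ≤ d+2)]
    norm_num

lemma coeff_pow_T (k t : ℕ) :
    (((1 : Polynomial ℕ) + Polynomial.X + Polynomial.X ^ 2) ^ k).coeff t
      = (Wset k ((t:ℤ) - k)).ncard := by
  induction k generalizing t with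
  | zero =>
    rw [pow_zero, Polynomial.coeff_one]
    match t with
    | 0 =>
      rw [if_pos rfl]
      have hs : Wset 0 (((0:ℕ):ℤ) - ((0:ℕ):ℤ)) = {[]} := by
        ext z
        simp only [Wset, Set.mem_setOf_eq, List.length_eq_zero_iff, Set.mem_singleton_iff]
        constructor
        · rintro ⟨h, _⟩; exact h
        · rintro rfl
          refine ⟨rfl, ?_⟩
          rw [height_nil]; norm_num
      rw [hs, Set.ncard_singleton]
    | (d+1) =>
      rw [if_neg (by omega)]
      rw [wset_empty (Or.inr (by push_cast; omega))]
      simp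
  | succ k ih =>
    rw [pow_succ, mul_comm, coeff_T_mul]
    have e : ((t:ℤ) - ((k+1:ℕ):ℤ)) = ((t:ℤ) - k) - 1 := by push_cast; ring
    rw [e, ncard_wset_succ]
    have g1 : ((t:ℤ) - k) - 1 + 1 = (t:ℤ) - k := by ring
    rw [g1, ih t]
    have hmid : (if 1 ≤ t then ((1+Polynomial.X+Polynomial.X^2 : Polynomial ℕ)^k).coeff (t-1) else 0)
        = (Wset k ((t:ℤ) - k - 1)).ncard := by
      by_cases h1 : 1 ≤ t
      · rw [if_pos h1, ih (t-1)]
        have e2 : ((t-1:ℕ):ℤ) - k = (t:ℤ) - k - 1 := by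
          push_cast [h1]; ring
        rw [e2]
      · rw [if_neg h1]
        have ht : t = 0 := by omega
        subst ht
        rw [wset_empty (Or.inl (by push_cast; omega))]
        simp
    have hhi : (if 2 ≤ t then ((1+Polynomial.X+Polynomial.X^2 : Polynomial ℕ)^k).coeff (t-2) else 0)
        = (Wset k ((t:ℤ) - k - 1 - 1)).ncard := by
      by_cases h2 : 2 ≤ t
      · rw [if_pos h2, ih (t-2)]
        have e2 : ((t-2:ℕ):ℤ) - k = (t:ℤ) - k - 1 - 1 := by push_cast [h2]; ring
        rw [e2]
      · rw [if_neg h2]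
        rw [wset_empty (Or.inl (by omega))]
        simp
    rw [hmid, hhi]

lemma ZSet_ncard_eq_coeff (k : ℕ) (hk : 2 ≤ k) :
    (((1 : Polynomial ℕ) + Polynomial.X + Polynomial.X ^ 2) ^ k).coeff (k - 2)
      = (ZSet k).ncard := by
  rw [coeff_pow_T]
  have e : ((k-2:ℕ):ℤ) - k = -2 := by
    have h2 : ((k-2:ℕ):ℤ) = (k:ℤ) - 2 := by push_cast [hk]; ring
    omega
  rw [e]
  rfl

theorem main_result (n : ℕ) (hn : 3 ≤ n) :
    motzkinEdges n =
      (((1 : Polynomial ℕ) + Polynomial.X + Polynomial.X ^ 2) ^ n).coeff (n - 2) +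
        (((1 : Polynomial ℕ) + Polynomial.X + Polynomial.X ^ 2) ^ (n - 1)).coeff (n - 3) := by
  rw [motzkinEdges_eq_ncard, ncard_covers_eq_marked, ncard_marked]
  have c1 : (mAB n Step.D Step.U).ncard = (PairSet (n-2) 1 0).ncard := by
    rw [ncard_mAB n (by omega)]
    simp [lo, δ]
  have c2 : (mAB n Step.D Step.H).ncard = (PairSet (n-2) 1 (-1)).ncard := by
    rw [ncard_mAB n (by omega)]
    simp [lo, δ]
  have c3 : (mAB n Step.H Step.U).ncard = (PairSet (n-2) 0 1).ncard := by
    rw [ncard_mAB n (by omega)]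
    simp [lo, δ]
  have c4 : (mAB n Step.H Step.H).ncard = (PairSet (n-2) 0 0).ncard := by
    rw [ncard_mAB n (by omega)]
    simp [lo, δ]
  rw [c1, c2, c3, c4, ncard_pDU_eq_pG2 (n-2), ncard_pDH_eq_pHU (n-2)]
  -- right-hand side
  have r1 : (((1 : Polynomial ℕ) + Polynomial.X + Polynomial.X ^ 2) ^ n).coeff (n - 2)
      = (PairSet (n-2) 0 0).ncard + (PairSet (n-2) 0 1).ncard + (PairSet (n-2) 0 2).ncard := by
    rw [ZSet_ncard_eq_coeff n (by omega)]
    have h2 := ncard_pHU_eq_Z (n-1)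
    have e : (n-1) + 1 = n := by omega
    rw [e] at h2
    rw [← h2]
    have h3 := ncard_pHU_succ (n-2)
    have e2 : (n-2) + 1 = n-1 := by omega
    rw [e2] at h3
    exact h3
  have r2 : (((1 : Polynomial ℕ) + Polynomial.X + Polynomial.X ^ 2) ^ (n-1)).coeff (n - 3)
      = (PairSet (n-2) 0 1).ncard := by
    have e3 : n - 3 = (n-1) - 2 := by omega
    rw [e3, ZSet_ncard_eq_coeff (n-1) (by omega)]
    have h2 := ncard_pHU_eq_Z (n-2)
    have e : (n-2) + 1 = n-1 := by omega
    rw [e] at h2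
    exact h2.symm
  rw [r1, r2]
  ring

end MZ

/-- For `n ≥ 3`, the number of edges of the Hasse diagram of the Motzkin lattice `M_n`
equals the coefficient of `x^(n-2)` in `(1+x+x²)^n` plus the coefficient of `x^(n-3)`
in `(1+x+x²)^(n-1)`. -/
theorem motzkinEdges_eq_trinomials (n : ℕ) (hn : 3 ≤ n) :
    motzkinEdges n =
      (((1 : Polynomial ℕ) + Polynomial.X + Polynomial.X ^ 2) ^ n).coeff (n - 2) +
        (((1 : Polynomial ℕ) + Polynomial.X + Polynomial.X ^ 2) ^ (n - 1)).coeff (n - 3) := by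
  exact MZ.main_result n hn
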